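/- For every t ∈ (0,T) the function α is twice differentiable at t and |α″(t)| ≤ (5/2) · T² · exp(2 μ M) · φ(t)³. (Bound on the second time derivative of the Carleman weight α, from the paper's estimate (2.301), with explicit constant C = 5/2.) -/

import Mathlib

/-- The Carleman weight `α(t) = (exp(μ c) − exp(2 μ M))/(t (T − t))` is twice
differentiable on `(0,T)` with `|α″(t)| ≤ (5/2) · T² · exp(2 μ M) · φ(t)³`
(paper's estimate (2.301) with `C = 5/2`). -/
theorem carleman_weight_alpha_second_deriv_bound
    (T μ lam M c : ℝ) (hT : 0 < T) (hμ : 1 ≤ μ) (hlam : 1 ≤ lam)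
    (hM : 0 < M) (hc0 : 0 ≤ c) (hcM : c ≤ M)
    (α φ : ℝ → ℝ)
    (hα : ∀ t, α t = (Real.exp (μ * c) - Real.exp (2 * μ * M)) / (t * (T - t)))
    (hφ : ∀ t, φ t = Real.exp (μ * c) / (t * (T - t))) :
    ∀ t ∈ Set.Ioo (0 : ℝ) T,
      DifferentiableAt ℝ α t ∧ DifferentiableAt ℝ (deriv α) t ∧
        |deriv (deriv α) t| ≤ (5 / 2) * T ^ 2 * Real.exp (2 * μ * M) * (φ t) ^ 3 := by
  intro t ht
  obtain ⟨ht0, htT⟩ := ht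
  set K : ℝ := Real.exp (μ * c) - Real.exp (2 * μ * M) with hKdef
  have hg : 0 < t * (T - t) := mul_pos ht0 (by linarith)
  have hgne : t * (T - t) ≠ 0 := ne_of_gt hg
  -- derivative of g(s) = s (T - s)
  have hgd : ∀ s : ℝ, HasDerivAt (fun s : ℝ => s * (T - s)) (T - 2 * s) s := by
    intro s
    have h := (hasDerivAt_id s).mul ((hasDerivAt_const s T).sub (hasDerivAt_id s))
    exact h.congr_deriv (by simp; ring)
  -- first derivative
  have hα' : ∀ s ∈ Set.Ioo (0 : ℝ) T,
      HasDerivAt α (K * (2 * s - T) / (s * (T - s)) ^ 2) s := by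
    intro s hs
    have hgs : s * (T - s) ≠ 0 :=
      ne_of_gt (mul_pos hs.1 (by linarith [hs.2]))
    have h := (hasDerivAt_const s K).div (hgd s) hgs
    have heq : α = fun u => K / (u * (T - u)) := funext fun u => hα u
    rw [heq]
    exact h.congr_deriv (by field_simp; ring)
  have hev : deriv α =ᶠ[nhds t]
      (fun s => K * (2 * s - T) / (s * (T - s)) ^ 2) := by
    filter_upwards [Ioo_mem_nhds ht0 htT] with s hs
    exact (hα' s hs).deriv
  -- second derivative
  have hnum : HasDerivAt (fun s : ℝ => K * (2 * s - T)) (K * 2) t := by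
    have h := (((hasDerivAt_id t).const_mul (2 : ℝ)).sub_const T).const_mul K
    exact h.congr_deriv (by simp)
  have hden : HasDerivAt (fun s : ℝ => (s * (T - s)) ^ 2)
      ((2 : ℕ) * (t * (T - t)) ^ 1 * (T - 2 * t)) t := (hgd t).pow 2
  have hf1 : HasDerivAt (fun s => K * (2 * s - T) / (s * (T - s)) ^ 2)
      (K * (2 * (t * (T - t)) + 2 * (T - 2 * t) ^ 2) / (t * (T - t)) ^ 3) t := by
    have h := hnum.div hden (pow_ne_zero 2 hgne)
    refine h.congr_deriv ?_
    push_cast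
    field_simp
    ring
  have hd2 : deriv (deriv α) t
      = K * (2 * (t * (T - t)) + 2 * (T - 2 * t) ^ 2) / (t * (T - t)) ^ 3 := by
    rw [hev.deriv_eq, hf1.deriv]
  refine ⟨(hα' t ⟨ht0, htT⟩).differentiableAt, ?_, ?_⟩
  · exact hf1.differentiableAt.congr_of_eventuallyEq hev
  · rw [hd2, hφ]
    have hE : (0 : ℝ) < Real.exp (2 * μ * M) := Real.exp_pos _
    have h1 : |K| ≤ Real.exp (2 * μ * M) := by
      have hle : Real.exp (μ * c) ≤ Real.exp (2 * μ * M) :=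
        Real.exp_le_exp.mpr (by nlinarith)
      have hpos : (0 : ℝ) < Real.exp (μ * c) := Real.exp_pos _
      rw [hKdef, abs_of_nonpos (by linarith)]
      linarith
    have hN : (0 : ℝ) ≤ 2 * (t * (T - t)) + 2 * (T - 2 * t) ^ 2 := by positivity
    have h2 : 2 * (t * (T - t)) + 2 * (T - 2 * t) ^ 2 ≤ (5 / 2) * T ^ 2 := by
      nlinarith [mul_nonneg ht0.le (sub_nonneg.mpr htT.le)]
    have he1 : (1 : ℝ) ≤ Real.exp (μ * c) ^ 3 := by
      have h0 : (1 : ℝ) ≤ Real.exp (μ * c) := Real.one_le_exp (by positivity)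
      have := pow_le_pow_left₀ (by norm_num : (0 : ℝ) ≤ 1) h0 3
      simpa using this
    have hg3 : (0 : ℝ) < (t * (T - t)) ^ 3 := by positivity
    have key : |K| * (2 * (t * (T - t)) + 2 * (T - 2 * t) ^ 2)
        ≤ 5 / 2 * T ^ 2 * Real.exp (2 * μ * M) * Real.exp (μ * c) ^ 3 := by
      nlinarith [abs_nonneg K, mul_le_mul h1 h2 hN hE.le,
        mul_pos hE (by positivity : (0 : ℝ) < 5 / 2 * T ^ 2)]
    rw [div_pow, abs_div, abs_of_pos hg3, abs_mul, abs_of_nonneg hN]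
    calc |K| * (2 * (t * (T - t)) + 2 * (T - 2 * t) ^ 2) / (t * (T - t)) ^ 3
        ≤ (5 / 2 * T ^ 2 * Real.exp (2 * μ * M) * Real.exp (μ * c) ^ 3)
            / (t * (T - t)) ^ 3 := (div_le_div_iff_of_pos_right hg3).mpr key
      _ = 5 / 2 * T ^ 2 * Real.exp (2 * μ * M)
            * (Real.exp (μ * c) ^ 3 / (t * (T - t)) ^ 3) := by ring
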